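/- For all integers m ≥ 2 and j ≥ 1, the number of (mj−2)-element subsets of {1,…,m(2j−1)} in which no two elements differ by exactly m equals m·C(j+2, 4) + C(m,2)·C(j+1, 2)², where C(a,b) denotes the binomial coefficient (note C(j+2,4) = 0 when j = 1, which accounts for the paper's indicator 1_{j>1}); that is, C_m(m(2j−1), mj−2) = m·C(j+2,4) + C(m,2)·C(j+1,2)². Equivalently, the n-tile tiling triangle entry ⟨mj+2, mj−2⟩_m equals this value. -/

import Mathlib

open Finset

/-- `Cm m N k` is the number of `k`-element subsets of `{1, …, N}` in which
no two elements differ by exactly `m`. -/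
def Cm (m N k : ℕ) : ℕ :=
  (((Finset.Icc 1 N).powersetCard k).filter (fun S => ∀ a ∈ S, a + m ∉ S)).card

lemma cm_zero_of_lt {m N k : ℕ} (h : N < k) : Cm m N k = 0 := by
  unfold Cm
  rw [Finset.powersetCard_eq_empty.2 (by simpa using h), Finset.filter_empty, Finset.card_empty]

lemma cm_of_le {m N k : ℕ} (h : N ≤ m) : Cm m N k = N.choose k := by
  unfold Cm
  rw [Finset.filter_true_of_mem, Finset.card_powersetCard, Nat.card_Icc]
  · norm_num
  · intro S hS a ha hc
    rw [Finset.mem_powersetCard] at hS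
    have := hS.1 hc
    rw [Finset.mem_Icc] at this
    have h1 := hS.1 ha
    rw [Finset.mem_Icc] at h1
    omega

lemma cm_zero_right (m N : ℕ) : Cm m N 0 = 1 := by
  unfold Cm
  rw [Finset.powersetCard_zero, Finset.filter_true_of_mem (by simp)]
  simp

lemma cm1_rec (q k : ℕ) : Cm 1 (q+2) (k+1) = Cm 1 (q+1) (k+1) + Cm 1 q k := by
  unfold Cm
  have hsplit := Finset.card_filter_add_card_filter_not
    (s := ((Finset.Icc 1 (q+2)).powersetCard (k+1)).filter (fun S => ∀ a ∈ S, a + 1 ∉ S))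
    (p := fun S => q + 2 ∈ S)
  rw [← hsplit, add_comm]
  congr 1
  · -- doesn't contain q+2: equals Cm 1 (q+1) (k+1)
    rw [Finset.filter_filter]
    congr 1
    ext S
    simp only [Finset.mem_filter, Finset.mem_powersetCard]
    constructor
    · rintro ⟨⟨hsub, hcard⟩, hprop, hnot⟩
      refine ⟨⟨?_, hcard⟩, hprop⟩
      intro a ha
      have h1 := hsub ha
      rw [Finset.mem_Icc] at h1 ⊢
      have : a ≠ q + 2 := by rintro rfl; exact hnot ha
      omega
    · rintro ⟨⟨hsub, hcard⟩, hprop⟩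
      refine ⟨⟨fun a ha => ?_, hcard⟩, hprop, fun hc => ?_⟩
      · have := hsub ha
        rw [Finset.mem_Icc] at this ⊢
        omega
      · have := hsub hc
        rw [Finset.mem_Icc] at this
        omega
  · -- contains q+2 : bijection with Cm 1 q k via erase
    rw [Finset.filter_filter]
    apply Finset.card_bij' (fun S _ => S.erase (q+2)) (fun T _ => insert (q+2) T)
    · intro S hS
      simp only [Finset.mem_filter] at hS
      exact Finset.insert_erase hS.2.2
    · intro T hT
      simp only [Finset.mem_filter, Finset.mem_powersetCard] at hT
      apply Finset.erase_insert
      intro hc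
      have := hT.1.1 hc
      rw [Finset.mem_Icc] at this
      omega
    · intro S hS
      simp only [Finset.mem_filter, Finset.mem_powersetCard] at hS ⊢
      obtain ⟨⟨hsub, hcard⟩, hprop, hmem⟩ := hS
      refine ⟨⟨?_, ?_⟩, ?_⟩
      · intro a ha
        rw [Finset.mem_erase] at ha
        have := hsub ha.2
        rw [Finset.mem_Icc] at this ⊢
        have hq1 : a ≠ q + 1 := by
          rintro rfl
          exact hprop _ ha.2 hmem
        omega
      · rw [Finset.card_erase_of_mem hmem, hcard]; omega
      · intro a ha
        rw [Finset.mem_erase] at ha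
        intro hc
        exact hprop a ha.2 (Finset.mem_of_mem_erase hc)
    · intro T hT
      simp only [Finset.mem_filter, Finset.mem_powersetCard] at hT ⊢
      obtain ⟨⟨hsub, hcard⟩, hprop⟩ := hT
      have hnot : q + 2 ∉ T := by
        intro hc
        have := hsub hc
        rw [Finset.mem_Icc] at this
        omega
      refine ⟨⟨?_, ?_⟩, ?_, Finset.mem_insert_self _ _⟩
      · intro a ha
        rw [Finset.mem_insert] at ha
        rcases ha with rfl | ha
        · simp [Finset.mem_Icc]
        · have := hsub ha
          rw [Finset.mem_Icc] at this ⊢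
          omega
      · rw [Finset.card_insert_of_notMem hnot, hcard]
      · intro a ha
        rw [Finset.mem_insert] at ha
        intro hc
        rw [Finset.mem_insert] at hc
        rcases ha with rfl | ha
        · rcases hc with hc | hc
          · omega
          · have := hsub hc; rw [Finset.mem_Icc] at this; omega
        · have h1 := hsub ha
          rw [Finset.mem_Icc] at h1
          rcases hc with hc | hc
          · omega
          · exact hprop a ha hc

lemma cm1_eq (q k : ℕ) : Cm 1 q k = (q + 1 - k).choose k := by
  induction q using Nat.strong_induction_on generalizing k with
  | _ q ih =>
    match q, k with
    | q, 0 => rw [cm_zero_right]; simp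
    | 0, (k+1) => rw [cm_zero_of_lt (by omega)]; simp
    | 1, (k+1) =>
      rw [cm_of_le (le_refl 1)]
      rcases k with _ | k
      · simp
      · rw [Nat.choose_eq_zero_of_lt (by omega), Nat.choose_eq_zero_of_lt (by omega)]
    | (q+2), (k+1) =>
      rw [cm1_rec, ih (q+1) (by omega), ih q (by omega)]
      rcases le_or_gt (k+1) (q+1) with h | h
      · have h1 : q + 2 + 1 - (k+1) = (q + 1 - k) + 1 := by omega
        have h2 : q + 1 + 1 - (k+1) = q + 1 - k := by omega
        rw [h1, h2, Nat.choose_succ_succ, Nat.succ_eq_add_one]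
        omega
      · rw [Nat.choose_eq_zero_of_lt (by omega), Nat.choose_eq_zero_of_lt (by omega),
          Nat.choose_eq_zero_of_lt (by omega)]

lemma divf {m c r : ℕ} (h : r ≤ m) : (c*(m+1)+r)/(m+1) = c := by
  rw [show c*(m+1)+r = r + (m+1)*c by ring, Nat.add_mul_div_left _ _ (by omega),
    Nat.div_eq_of_lt (by omega)]
  omega

lemma f_formula {m c r : ℕ} (h1 : 1 ≤ r) (h : r ≤ m) :
    (c*(m+1)+r) - (c*(m+1)+r)/(m+1) = c*m+r := by
  rw [divf h]
  have h2 : c*(m+1) = c*m + c := by ring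
  omega

lemma divg {m c r : ℕ} (hm : 1 ≤ m) (h1 : 1 ≤ r) (h : r ≤ m) : (c*m+r-1)/m = c := by
  rw [show c*m+r-1 = (r-1) + m*c by rw [Nat.mul_comm]; omega,
    Nat.add_mul_div_left _ _ (by omega), Nat.div_eq_of_lt (by omega)]
  omega

lemma g_formula {m c r : ℕ} (hm : 1 ≤ m) (h1 : 1 ≤ r) (h : r ≤ m) :
    (c*m+r) + ((c*m+r)-1)/m = c*(m+1)+r := by
  rw [show (c*m+r)-1 = c*m+r-1 by rfl, divg hm h1 h]
  have h2 : c*(m+1) = c*m + c := by ring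
  omega

lemma nondiv_of {m c r : ℕ} (h1 : 1 ≤ r) (h : r ≤ m) : ¬ (m+1) ∣ (c*(m+1)+r) := by
  rw [Nat.dvd_iff_mod_eq_zero, show c*(m+1)+r = r + c*(m+1) by ring,
    Nat.add_mul_mod_self_right, Nat.mod_eq_of_lt (by omega)]
  omega

lemma decomp_nondiv {m a : ℕ} (h2 : ¬ (m+1) ∣ a) :
    ∃ c r, 1 ≤ r ∧ r ≤ m ∧ a = c*(m+1)+r := by
  refine ⟨a/(m+1), a % (m+1), ?_, ?_, ?_⟩
  · rcases Nat.eq_zero_or_pos (a % (m+1)) with h | h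
    · exact absurd (Nat.dvd_iff_mod_eq_zero.2 h) h2
    · omega
  · have := Nat.mod_lt a (show 0 < m+1 by omega); omega
  · have := Nat.div_add_mod a (m+1)
    have h3 : a/(m+1)*(m+1) = (m+1)*(a/(m+1)) := by ring
    omega

lemma decomp_pos {m b : ℕ} (hm : 1 ≤ m) (h1 : 1 ≤ b) :
    ∃ c r, 1 ≤ r ∧ r ≤ m ∧ b = c*m+r := by
  refine ⟨(b-1)/m, (b-1) % m + 1, by omega, ?_, ?_⟩
  · have := Nat.mod_lt (b-1) (show 0 < m by omega); omega
  · have := Nat.div_add_mod (b-1) m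
    have h3 : (b-1)/m*m = m*((b-1)/m) := by ring
    omega

lemma unique_decomp {m c r c' r' : ℕ} (hm : 1 ≤ m) (h1 : 1 ≤ r) (h2 : r ≤ m)
    (h3 : 1 ≤ r') (h4 : r' ≤ m) (h : c*m+r = c'*m+r') : c = c' ∧ r = r' := by
  have e1 : (c*m+r-1)/m = c := divg hm h1 h2
  have e2 : (c'*m+r'-1)/m = c' := divg hm h3 h4
  rw [h] at e1
  have hc : c = c' := by omega
  subst hc
  omega

lemma gf_id {m a : ℕ} (hm : 1 ≤ m) (h : ¬ (m+1) ∣ a) :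
    (a - a/(m+1)) + ((a - a/(m+1)) - 1)/m = a := by
  obtain ⟨c, r, hr1, hr2, rfl⟩ := decomp_nondiv h
  rw [f_formula hr1 hr2, g_formula hm hr1 hr2]

lemma fg_id {m b : ℕ} (hm : 1 ≤ m) (h : 1 ≤ b) :
    (b + (b-1)/m) - (b + (b-1)/m)/(m+1) = b := by
  obtain ⟨c, r, hr1, hr2, rfl⟩ := decomp_pos hm h
  rw [g_formula hm hr1 hr2, f_formula hr1 hr2]

lemma g_nondiv {m b : ℕ} (hm : 1 ≤ m) (h : 1 ≤ b) : ¬ (m+1) ∣ (b + (b-1)/m) := by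
  obtain ⟨c, r, hr1, hr2, rfl⟩ := decomp_pos hm h
  rw [g_formula hm hr1 hr2]
  exact nondiv_of hr1 hr2

lemma f_pos {m a : ℕ} (h : ¬ (m+1) ∣ a) : 1 ≤ a - a/(m+1) := by
  obtain ⟨c, r, hr1, hr2, rfl⟩ := decomp_nondiv h
  rw [f_formula hr1 hr2]
  omega

lemma f_mem {m q a : ℕ} (hm : 1 ≤ m) (ha : a ∈ Finset.Icc 1 ((m+1)*q))
    (h : ¬ (m+1) ∣ a) : a - a/(m+1) ∈ Finset.Icc 1 (m*q) := by
  obtain ⟨c, r, hr1, hr2, rfl⟩ := decomp_nondiv h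
  rw [f_formula hr1 hr2]
  rw [Finset.mem_Icc] at ha ⊢
  have hc : c + 1 ≤ q := by
    by_contra hcq
    push_neg at hcq
    have h5 : q*(m+1) ≤ c*(m+1) := Nat.mul_le_mul_right _ (by omega)
    have h6 : (m+1)*q = q*(m+1) := by ring
    omega
  have h5 : (c+1)*m ≤ q*m := Nat.mul_le_mul_right _ hc
  have h6 : (c+1)*m = c*m + m := by ring
  have h7 : q*m = m*q := by ring
  omega

lemma g_mem {m q b : ℕ} (hm : 1 ≤ m) (hb : b ∈ Finset.Icc 1 (m*q)) :
    b + (b-1)/m ∈ Finset.Icc 1 ((m+1)*q) := by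
  rw [Finset.mem_Icc] at hb
  obtain ⟨c, r, hr1, hr2, rfl⟩ := decomp_pos hm hb.1
  rw [g_formula hm hr1 hr2]
  rw [Finset.mem_Icc]
  have hc : c + 1 ≤ q := by
    by_contra hcq
    push_neg at hcq
    have h5 : q*m ≤ c*m := Nat.mul_le_mul_right _ (by omega)
    have h6 : m*q = q*m := by ring
    omega
  have h5 : (c+1)*(m+1) ≤ q*(m+1) := Nat.mul_le_mul_right _ hc
  have h6 : (c+1)*(m+1) = c*(m+1) + (m+1) := by ring
  have h7 : q*(m+1) = (m+1)*q := by ring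
  omega

lemma mul_mem {m q x : ℕ} (hx : x ∈ Finset.Icc 1 q) :
    x*(m+1) ∈ Finset.Icc 1 ((m+1)*q) := by
  rw [Finset.mem_Icc] at hx ⊢
  constructor
  · have : 1*1 ≤ x*(m+1) := Nat.mul_le_mul hx.1 (by omega)
    omega
  · have h5 : x*(m+1) ≤ q*(m+1) := Nat.mul_le_mul_right _ hx.2
    have h7 : q*(m+1) = (m+1)*q := by ring
    omega

lemma f_add {m a : ℕ} (hm : 1 ≤ m) (h : ¬ (m+1) ∣ a) :
    (a+(m+1)) - (a+(m+1))/(m+1) = (a - a/(m+1)) + m := by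
  obtain ⟨c, r, hr1, hr2, rfl⟩ := decomp_nondiv h
  have e : c*(m+1)+r+(m+1) = (c+1)*(m+1)+r := by ring
  rw [e, f_formula hr1 hr2, f_formula hr1 hr2]
  have h6 : (c+1)*m = c*m + m := by ring
  omega

lemma conv (m q k : ℕ) (hm : 1 ≤ m) :
    Cm (m+1) ((m+1)*q) k = ∑ t ∈ Finset.range (k+1), Cm 1 q t * Cm m (m*q) (k-t) := by
  classical
  unfold Cm
  rw [Finset.card_eq_sum_card_fiberwise
    (f := fun S => (S.filter (fun a => (m+1) ∣ a)).card) (t := Finset.range (k+1)) ?hfib]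
  case hfib =>
    intro S hS
    simp only [Finset.mem_coe, Finset.mem_filter, Finset.mem_powersetCard] at hS
    rw [Finset.mem_coe, Finset.mem_range]
    show (S.filter (fun a => (m+1) ∣ a)).card < k + 1
    have h2 := Finset.card_filter_le S (fun a => (m+1) ∣ a)
    omega
  apply Finset.sum_congr rfl
  intro t ht
  rw [Finset.mem_range] at ht
  rw [← Finset.card_product]
  apply Finset.card_bij'
    (i := fun S _ => ((S.filter (fun a => (m+1) ∣ a)).image (· / (m+1)),
                      (S.filter (fun a => ¬ (m+1) ∣ a)).image (fun a => a - a/(m+1))))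
    (j := fun P _ => (P.1.image (· * (m+1))) ∪ (P.2.image (fun b => b + (b-1)/m)))
  -- left_inv : j (i S) = S
  · intro S hS
    simp only [Finset.mem_filter, Finset.mem_powersetCard] at hS
    obtain ⟨⟨⟨hsub, hcard⟩, hprop⟩, hfib⟩ := hS
    simp only [Finset.image_image]
    have e1 : (S.filter (fun a => (m+1) ∣ a)).image ((· * (m+1)) ∘ (· / (m+1)))
        = S.filter (fun a => (m+1) ∣ a) := by
      rw [Finset.image_congr (g := id), Finset.image_id]
      intro a ha
      simp only [Finset.mem_coe, Finset.mem_filter] at ha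
      show a / (m+1) * (m+1) = a
      exact Nat.div_mul_cancel ha.2
    have e2 : (S.filter (fun a => ¬ (m+1) ∣ a)).image
          ((fun b => b + (b-1)/m) ∘ (fun a => a - a/(m+1)))
        = S.filter (fun a => ¬ (m+1) ∣ a) := by
      rw [Finset.image_congr (g := id), Finset.image_id]
      intro a ha
      simp only [Finset.mem_coe, Finset.mem_filter] at ha
      exact gf_id hm ha.2
    rw [e1, e2, Finset.filter_union_filter_not_eq]
  -- right_inv : i (j P) = P
  · rintro ⟨T, U⟩ hP
    rw [Finset.mem_product] at hP
    obtain ⟨hP1, hP2⟩ := hP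
    simp only [Finset.mem_filter, Finset.mem_powersetCard] at hP1 hP2
    have hT := hP1.1.1
    have hU := hP2.1.1
    have hdivT : ∀ x ∈ T.image (· * (m+1)), (m+1) ∣ x := by
      intro x hx
      rw [Finset.mem_image] at hx
      obtain ⟨y, _, rfl⟩ := hx
      exact dvd_mul_left (m+1) y
    have hndivU : ∀ x ∈ U.image (fun b => b + (b-1)/m), ¬ (m+1) ∣ x := by
      intro x hx
      rw [Finset.mem_image] at hx
      obtain ⟨b, hb, rfl⟩ := hx
      have hb1 : 1 ≤ b := by
        have := hU hb; rw [Finset.mem_Icc] at this; omega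
      exact g_nondiv hm hb1
    have efilt1 : ((T.image (· * (m+1))) ∪ (U.image (fun b => b + (b-1)/m))).filter
          (fun a => (m+1) ∣ a) = T.image (· * (m+1)) := by
      rw [Finset.filter_union, Finset.filter_true_of_mem hdivT,
        Finset.filter_false_of_mem hndivU, Finset.union_empty]
    have efilt2 : ((T.image (· * (m+1))) ∪ (U.image (fun b => b + (b-1)/m))).filter
          (fun a => ¬ (m+1) ∣ a) = U.image (fun b => b + (b-1)/m) := by
      rw [Finset.filter_union, Finset.filter_false_of_mem (fun x hx h => h (hdivT x hx)),
        Finset.filter_true_of_mem hndivU, Finset.empty_union]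
    simp only [Prod.mk.injEq]
    constructor
    · rw [efilt1, Finset.image_image, Finset.image_congr (g := id), Finset.image_id]
      intro a _
      show a * (m+1) / (m+1) = a
      exact Nat.mul_div_cancel a (by omega)
    · rw [efilt2, Finset.image_image, Finset.image_congr (g := id), Finset.image_id]
      intro b hb
      simp only [Finset.mem_coe] at hb
      have hb1 : 1 ≤ b := by
        have := hU hb; rw [Finset.mem_Icc] at this; omega
      exact fg_id hm hb1
  -- hi : i S ∈ product
  · intro S hS
    simp only [Finset.mem_filter, Finset.mem_powersetCard] at hS
    obtain ⟨⟨⟨hsub, hcard⟩, hprop⟩, hfib⟩ := hS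
    have hfib' : (S.filter (fun a => (m+1) ∣ a)).card = t := hfib
    rw [Finset.mem_product]
    constructor
    · simp only [Finset.mem_filter, Finset.mem_powersetCard]
      refine ⟨⟨?_, ?_⟩, ?_⟩
      · intro x hx
        rw [Finset.mem_image] at hx
        obtain ⟨a, ha, rfl⟩ := hx
        rw [Finset.mem_filter] at ha
        obtain ⟨y, rfl⟩ := ha.2
        have hmem := hsub ha.1
        rw [Finset.mem_Icc] at hmem ⊢
        rw [Nat.mul_div_cancel_left y (show 0 < m+1 by omega)]
        have hy : y ≠ 0 := by rintro rfl; simp at hmem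
        exact ⟨by omega, Nat.le_of_mul_le_mul_left hmem.2 (by omega)⟩
      · rw [Finset.card_image_of_injOn, hfib']
        intro a ha b hb h
        simp only [Finset.mem_coe, Finset.mem_filter] at ha hb
        have e1 := Nat.div_mul_cancel ha.2
        have e2 := Nat.div_mul_cancel hb.2
        rw [show a/(m+1) = b/(m+1) from h] at e1
        omega
      · intro x hx hx1
        rw [Finset.mem_image] at hx hx1
        obtain ⟨a, ha, haeq⟩ := hx
        obtain ⟨a', ha', ha'eq⟩ := hx1
        rw [Finset.mem_filter] at ha ha'
        have e1 : a = x * (m+1) := by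
          have := Nat.div_mul_cancel ha.2; rw [haeq] at this; omega
        have e2 : a' = (x+1) * (m+1) := by
          have := Nat.div_mul_cancel ha'.2; rw [ha'eq] at this; omega
        have e3 : a' = a + (m+1) := by
          have : (x+1)*(m+1) = x*(m+1) + (m+1) := by ring
          omega
        exact hprop a ha.1 (e3 ▸ ha'.1)
    · simp only [Finset.mem_filter, Finset.mem_powersetCard]
      refine ⟨⟨?_, ?_⟩, ?_⟩
      · intro x hx
        rw [Finset.mem_image] at hx
        obtain ⟨a, ha, rfl⟩ := hx
        rw [Finset.mem_filter] at ha
        exact f_mem hm (hsub ha.1) ha.2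
      · rw [Finset.card_image_of_injOn]
        · have hside := Finset.card_filter_add_card_filter_not
            (s := S) (p := fun a => (m+1) ∣ a)
          omega
        · intro a ha b hb h
          simp only [Finset.mem_coe, Finset.mem_filter] at ha hb
          have e1 := gf_id hm ha.2
          have e2 := gf_id hm hb.2
          rw [show a - a/(m+1) = b - b/(m+1) from h] at e1
          omega
      · intro b hb hb1
        rw [Finset.mem_image] at hb hb1
        obtain ⟨a, ha, haeq⟩ := hb
        obtain ⟨a', ha', ha'eq⟩ := hb1
        rw [Finset.mem_filter] at ha ha'
        have hnd : ¬ (m+1) ∣ (a+(m+1)) := by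
          rw [Nat.dvd_iff_mod_eq_zero, Nat.add_mod_right, ← Nat.dvd_iff_mod_eq_zero]
          exact ha.2
        have e1 : a' - a'/(m+1) = (a+(m+1)) - (a+(m+1))/(m+1) := by
          rw [f_add hm ha.2]
          omega
        have e2 := gf_id hm ha'.2
        have e3 := gf_id hm hnd
        rw [e1] at e2
        have e4 : a' = a + (m+1) := by omega
        exact hprop a ha.1 (e4 ▸ ha'.1)
  -- hj : j P ∈ fiber
  · rintro ⟨T, U⟩ hP
    rw [Finset.mem_product] at hP
    simp only [Finset.mem_filter, Finset.mem_powersetCard] at hP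
    obtain ⟨⟨⟨hTsub, hTcard⟩, hTprop⟩, ⟨⟨hUsub, hUcard⟩, hUprop⟩⟩ := hP
    have hdivT : ∀ x ∈ T.image (· * (m+1)), (m+1) ∣ x := by
      intro x hx
      rw [Finset.mem_image] at hx
      obtain ⟨y, _, rfl⟩ := hx
      exact dvd_mul_left (m+1) y
    have hndivU : ∀ x ∈ U.image (fun b => b + (b-1)/m), ¬ (m+1) ∣ x := by
      intro x hx
      rw [Finset.mem_image] at hx
      obtain ⟨b, hb, rfl⟩ := hx
      have hb1 : 1 ≤ b := by
        have := hUsub hb; rw [Finset.mem_Icc] at this; omega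
      exact g_nondiv hm hb1
    have hdisj : Disjoint (T.image (· * (m+1))) (U.image (fun b => b + (b-1)/m)) := by
      rw [Finset.disjoint_left]
      intro x hx hx'
      exact hndivU x hx' (hdivT x hx)
    simp only [Finset.mem_filter, Finset.mem_powersetCard]
    refine ⟨⟨⟨?_, ?_⟩, ?_⟩, ?_⟩
    · intro x hx
      rw [Finset.mem_union] at hx
      rcases hx with hx | hx
      · rw [Finset.mem_image] at hx
        obtain ⟨y, hy, rfl⟩ := hx
        exact mul_mem (hTsub hy)
      · rw [Finset.mem_image] at hx
        obtain ⟨b, hb, rfl⟩ := hx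
        exact g_mem hm (hUsub hb)
    · rw [Finset.card_union_of_disjoint hdisj,
        Finset.card_image_of_injOn, Finset.card_image_of_injOn, hTcard, hUcard]
      · omega
      · intro a ha b hb h
        simp only [Finset.mem_coe] at ha hb
        have ha1 : 1 ≤ a := by have := hUsub ha; rw [Finset.mem_Icc] at this; omega
        have hb1 : 1 ≤ b := by have := hUsub hb; rw [Finset.mem_Icc] at this; omega
        have e1 := fg_id hm ha1
        have e2 := fg_id hm hb1
        rw [show a + (a-1)/m = b + (b-1)/m from h] at e1
        omega
      · intro a _ b _ h
        exact Nat.eq_of_mul_eq_mul_right (show 0 < m+1 by omega) h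
    · intro a ha hc
      rw [Finset.mem_union] at ha hc
      rcases ha with ha | ha
      · rw [Finset.mem_image] at ha
        obtain ⟨x, hx, rfl⟩ := ha
        rcases hc with hc | hc
        · rw [Finset.mem_image] at hc
          obtain ⟨y, hy, hyeq⟩ := hc
          have : y = x + 1 := by
            have e : (x+1)*(m+1) = x*(m+1) + (m+1) := by ring
            have := Nat.eq_of_mul_eq_mul_right (show 0 < m+1 by omega)
              (show y*(m+1) = (x+1)*(m+1) by omega)
            omega
          exact hTprop x hx (this ▸ hy)
        · exact hndivU _ hc ⟨x+1, by ring⟩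
      · rw [Finset.mem_image] at ha
        obtain ⟨b, hb, rfl⟩ := ha
        have hb1 : 1 ≤ b := by have := hUsub hb; rw [Finset.mem_Icc] at this; omega
        have hgnd := g_nondiv hm hb1
        rcases hc with hc | hc
        · rw [Finset.mem_image] at hc
          obtain ⟨y, hy, hyeq⟩ := hc
          have : (m+1) ∣ (b + (b-1)/m + (m+1)) := by
            rw [← hyeq]; exact dvd_mul_left (m+1) y
          rw [Nat.dvd_iff_mod_eq_zero, Nat.add_mod_right, ← Nat.dvd_iff_mod_eq_zero] at this
          exact hgnd this
        · rw [Finset.mem_image] at hc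
          obtain ⟨b', hb', hb'eq⟩ := hc
          have hb'1 : 1 ≤ b' := by have := hUsub hb'; rw [Finset.mem_Icc] at this; omega
          have hnd : ¬ (m+1) ∣ (b + (b-1)/m + (m+1)) := by
            rw [Nat.dvd_iff_mod_eq_zero, Nat.add_mod_right, ← Nat.dvd_iff_mod_eq_zero]
            exact hgnd
          have e1 := fg_id hm hb'1
          have e2 := fg_id hm hb1
          have e3 : (b + (b-1)/m + (m+1)) - (b + (b-1)/m + (m+1))/(m+1)
              = ((b + (b-1)/m) - (b + (b-1)/m)/(m+1)) + m := f_add hm hgnd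
          rw [e2] at e3
          have e4 : b' = b + m := by
            rw [hb'eq] at e1
            omega
          exact hUprop b hb (e4 ▸ hb')
    · show ((T.image (· * (m+1)) ∪ U.image (fun b => b + (b-1)/m)).filter
          (fun a => (m+1) ∣ a)).card = t
      rw [Finset.filter_union, Finset.filter_true_of_mem hdivT,
        Finset.filter_false_of_mem hndivU, Finset.union_empty,
        Finset.card_image_of_injOn, hTcard]
      intro a _ b _ h
      exact Nat.eq_of_mul_eq_mul_right (show 0 < m+1 by omega) h

lemma cm1_top {j : ℕ} (hj : 1 ≤ j) : Cm 1 (2*j-1) j = 1 := by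
  rw [cm1_eq, show 2*j-1+1-j = j by omega, Nat.choose_self]

lemma cm1_top1 {j : ℕ} (hj : 1 ≤ j) : Cm 1 (2*j-1) (j-1) = (j+1).choose 2 := by
  rw [cm1_eq, show 2*j-1+1-(j-1) = j+1 by omega, show j - 1 = (j+1) - 2 by omega]
  exact Nat.choose_symm (by omega)

lemma cm1_top2 {j : ℕ} (hj : 2 ≤ j) : Cm 1 (2*j-1) (j-2) = (j+2).choose 4 := by
  rw [cm1_eq, show 2*j-1+1-(j-2) = j+2 by omega, show j - 2 = (j+2) - 4 by omega]
  exact Nat.choose_symm (by omega)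

lemma cm1_vanish {j t : ℕ} (h : j < t) : Cm 1 (2*j-1) t = 0 := by
  rw [cm1_eq]
  exact Nat.choose_eq_zero_of_lt (by omega)

lemma cm_vanish {j : ℕ} : ∀ m, 1 ≤ m → ∀ s, m*j < s → Cm m (m*(2*j-1)) s = 0 := by
  intro m hm'
  induction m, hm' using Nat.le_induction with
  | base =>
    intro s hs
    simp only [one_mul] at hs ⊢
    exact cm1_vanish hs
  | succ m hm ih =>
    intro s hs
    have hmj : (m+1)*j = m*j + j := by ring
    rw [conv m (2*j-1) s hm]
    apply Finset.sum_eq_zero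
    intro t _
    rcases le_or_gt t j with h | h
    · rw [ih (s - t) (by omega), Nat.mul_zero]
    · rw [cm1_vanish h, Nat.zero_mul]

lemma cm_P {j : ℕ} (hj : 1 ≤ j) : ∀ m, 1 ≤ m → Cm m (m*(2*j-1)) (m*j) = 1 := by
  intro m hm'
  induction m, hm' using Nat.le_induction with
  | base => simp only [one_mul]; exact cm1_top hj
  | succ m hm ih =>
    have hmj : (m+1)*j = m*j + j := by ring
    rw [conv m (2*j-1) ((m+1)*j) hm]
    rw [Finset.sum_eq_single_of_mem j (by rw [Finset.mem_range]; omega)]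
    · rw [show (m+1)*j - j = m*j by omega, ih, cm1_top hj, Nat.mul_one]
    · intro t _ hne
      rcases le_or_gt t j with h | h
      · rw [cm_vanish m hm ((m+1)*j - t) (by omega), Nat.mul_zero]
      · rw [cm1_vanish h, Nat.zero_mul]

lemma cm_Q {j : ℕ} (hj : 1 ≤ j) : ∀ m, 1 ≤ m → Cm m (m*(2*j-1)) (m*j-1) = m * (j+1).choose 2 := by
  intro m hm'
  induction m, hm' using Nat.le_induction with
  | base => simp only [one_mul]; exact cm1_top1 hj
  | succ m hm ih =>
    have hmj : (m+1)*j = m*j + j := by ring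
    have hmj1 : 1 ≤ m*j := Nat.one_le_iff_ne_zero.2 (by positivity)
    rw [conv m (2*j-1) ((m+1)*j-1) hm]
    have hsub : ({j-1, j} : Finset ℕ) ⊆ Finset.range ((m+1)*j-1+1) := by
      intro x hx
      simp only [Finset.mem_insert, Finset.mem_singleton] at hx
      rw [Finset.mem_range]
      omega
    rw [← Finset.sum_subset hsub]
    · rw [Finset.sum_insert (by simp; omega), Finset.sum_singleton,
        show (m+1)*j-1 - (j-1) = m*j by omega, show (m+1)*j-1 - j = m*j-1 by omega,
        cm_P hj m hm, ih, cm1_top hj, cm1_top1 hj]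
      ring
    · intro t _ ht
      simp only [Finset.mem_insert, Finset.mem_singleton] at ht
      push_neg at ht
      rcases le_or_gt t j with h | h
      · rw [cm_vanish m hm ((m+1)*j-1 - t) (by omega), Nat.mul_zero]
      · rw [cm1_vanish h, Nat.zero_mul]

lemma cm_R {j : ℕ} (hj : 2 ≤ j) : ∀ m, 1 ≤ m →
    Cm m (m*(2*j-1)) (m*j-2) = m * (j+2).choose 4 + m.choose 2 * ((j+1).choose 2)^2 := by
  intro m hm'
  induction m, hm' using Nat.le_induction with
  | base =>
    simp only [one_mul]
    rw [cm1_top2 hj]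
    simp [Nat.choose_one_right]
  | succ m hm ih =>
    have hmj : (m+1)*j = m*j + j := by ring
    have hmj1 : j ≤ m*j := Nat.le_mul_of_pos_left j (by omega)
    rw [conv m (2*j-1) ((m+1)*j-2) hm]
    have hsub : ({j-2, j-1, j} : Finset ℕ) ⊆ Finset.range ((m+1)*j-2+1) := by
      intro x hx
      simp only [Finset.mem_insert, Finset.mem_singleton] at hx
      rw [Finset.mem_range]
      omega
    rw [← Finset.sum_subset hsub]
    · rw [Finset.sum_insert (by simp; omega), Finset.sum_insert (by simp; omega),
        Finset.sum_singleton,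
        show (m+1)*j-2 - (j-2) = m*j by omega, show (m+1)*j-2 - (j-1) = m*j-1 by omega,
        show (m+1)*j-2 - j = m*j-2 by omega,
        cm_P (by omega) m hm, cm_Q (by omega) m hm, ih, cm1_top (by omega),
        cm1_top1 (by omega), cm1_top2 hj]
      have hc : (m+1).choose 2 = m.choose 2 + m := by
        rw [show (2:ℕ) = 1+1 from rfl, Nat.choose_succ_succ, Nat.choose_one_right,
          Nat.succ_eq_add_one]
        omega
      rw [hc]
      ring
    · intro t _ ht
      simp only [Finset.mem_insert, Finset.mem_singleton] at ht
      push_neg at ht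
      rcases le_or_gt t j with h | h
      · rw [cm_vanish m hm ((m+1)*j-2 - t) (by omega), Nat.mul_zero]
      · rw [cm1_vanish h, Nat.zero_mul]

theorem stmt_16 (m j : ℕ) (hm : 2 ≤ m) (hj : 1 ≤ j) :
    Cm m (m * (2 * j - 1)) (m * j - 2)
      = m * Nat.choose (j + 2) 4 + Nat.choose m 2 * Nat.choose (j + 1) 2 ^ 2 := by
  rcases eq_or_lt_of_le hj with rfl | hj2
  · norm_num
    rw [cm_of_le (le_refl m), Nat.choose_symm hm]
  · exact cm_R hj2 m (by omega)
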